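/- Let P be a finite ground normal program that is OLON-free, and let R ⊆ P be a relevance-closed subprogram of P with atom set B_R. Then the answer sets of P projected onto B_R coincide with the answer sets of R: AS_{B_R}(P) = AS(R). -/

import Mathlib

open scoped Classical

/-- A ground normal rule: a head atom, a finite positive body and a finite negative body. -/
structure GRule (α : Type) where
  head : α
  pos : Finset α
  neg : Finset α

namespace ASP

variable {α ι : Type}

/-- The Gelfond–Lifschitz reduct of a program `P` w.r.t. an interpretation `I`:
the set of positive rules `(head r, pos r)` for rules whose negative body avoids `I`. -/
def glReduct (P : Set (GRule α)) (I : Set α) : Set (α × Finset α) :=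
  {hb | ∃ r ∈ P, (∀ c ∈ r.neg, c ∉ I) ∧ hb = (r.head, r.pos)}

/-- `J` is a model of a set of positive rules `Q`. -/
def IsModelPos (Q : Set (α × Finset α)) (J : Set α) : Prop :=
  ∀ hb ∈ Q, (∀ b ∈ hb.2, b ∈ J) → hb.1 ∈ J

/-- `A` is an answer set (stable model) of `P`. -/
def IsAnswerSet (P : Set (GRule α)) (A : Set α) : Prop :=
  IsModelPos (glReduct P A) A ∧ ∀ B, B ⊂ A → ¬ IsModelPos (glReduct P A) B

/-- The set of answer sets of `P`. -/
def AS (P : Set (GRule α)) : Set (Set α) := {A | IsAnswerSet P A}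

/-- Operator deriving new true atoms, given a three-valued interpretation `I = (I_T, I_F)`. -/
def opTrue (P : Set (GRule α)) (I : Set α × Set α) : Set α →o Set α where
  toFun T := {a | a ∉ I.1 ∧ ∃ r ∈ P, r.head = a ∧ (∀ b ∈ r.pos, b ∈ I.1 ∪ T) ∧
    ∀ c ∈ r.neg, c ∈ I.2}
  monotone' := by
    intro T T' hT a ha
    obtain ⟨h1, r, hr, hh, hp, hn⟩ := ha
    exact ⟨h1, r, hr, hh, fun b hb => (hp b hb).imp id fun h => hT h, hn⟩

/-- Operator deriving new false atoms, given a three-valued interpretation `I = (I_T, I_F)`. -/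
def opFalse (P : Set (GRule α)) (I : Set α × Set α) : Set α →o Set α where
  toFun F := {a | a ∉ I.2 ∧ ∀ r ∈ P, r.head = a →
    (∃ b ∈ r.pos, b ∈ I.2 ∪ F) ∨ ∃ c ∈ r.neg, c ∈ I.1}
  monotone' := by
    intro F F' hF a ha
    refine ⟨ha.1, fun r hr hh => ?_⟩
    rcases ha.2 r hr hh with ⟨b, hb, hbm⟩ | h
    · exact Or.inl ⟨b, hb, hbm.imp id fun h => hF h⟩
    · exact Or.inr h

/-- The iterated fixpoint operator: `IFP(I) = I ⊔ (lfp (opTrue I), gfp (opFalse I))`. -/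
def IFP (P : Set (GRule α)) (I : Set α × Set α) : Set α × Set α :=
  I ⊔ (OrderHom.lfp (opTrue P I), OrderHom.gfp (opFalse P I))

/-- The well-founded model of `P`: the least fixpoint of `IFP`
(as the infimum of all prefixpoints of the monotone operator `IFP`). -/
def WFM (P : Set (GRule α)) : Set α × Set α :=
  sInf {I | IFP P I ≤ I}

/-- The WF reduct of `P`: delete rules whose positive body meets the false atoms or whose
negative body meets the true atoms of the WFM, and remove from the remaining rules the
true atoms from positive bodies and the false atoms from negative bodies. -/
noncomputable def WFreduct (P : Set (GRule α)) : Set (GRule α) :=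
  {r' | ∃ r ∈ P, (∀ b ∈ r.pos, b ∉ (WFM P).2) ∧ (∀ c ∈ r.neg, c ∉ (WFM P).1) ∧
    r' = ⟨r.head, r.pos.filter (fun b => b ∉ (WFM P).1),
          r.neg.filter (fun c => c ∉ (WFM P).2)⟩}

/-- The set of atoms occurring in a set of rules (as heads or in bodies). -/
def atomsOf (R : Set (GRule α)) : Set α :=
  {a | ∃ r ∈ R, a = r.head ∨ a ∈ r.pos ∨ a ∈ r.neg}

/-- `R` is a relevance-closed subprogram of `P`. -/
def RelevanceClosed (P R : Set (GRule α)) : Prop :=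
  R ⊆ P ∧ ∀ r ∈ P, r.head ∈ atomsOf R → r ∈ R

/-- Signed edge of the dependency graph of `P`; `s = true` marks a negative edge. -/
def Edge (P : Set (GRule α)) (x y : α) (s : Bool) : Prop :=
  ∃ r ∈ P, r.head = x ∧ ((s = false ∧ y ∈ r.pos) ∨ (s = true ∧ y ∈ r.neg))

/-- `Reaches P x y b`: there is a nonempty walk in the signed dependency graph from `x`
to `y` whose number of negative edges has parity `b` (`true` = odd). -/
inductive Reaches (P : Set (GRule α)) : α → α → Bool → Prop
  | single {x y s} : Edge P x y s → Reaches P x y s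
  | step {x y z s t} : Edge P x y s → Reaches P y z t → Reaches P x z (xor s t)

/-- `P` has no odd loops over negation. -/
def OLONFree (P : Set (GRule α)) : Prop := ∀ a : α, ¬ Reaches P a a true

/-- The program of a world `w`: `P₀` plus the facts `aᵢ` for `i ∈ w`. -/
def worldProg (P0 : Set (GRule α)) (atom : ι → α) (w : Finset ι) : Set (GRule α) :=
  P0 ∪ {r | ∃ i ∈ w, r = ⟨atom i, ∅, ∅⟩}

/-- The probability of a world `w` of a PASP with index set `S`. -/
noncomputable def worldP (prob : ι → ℝ) (S w : Finset ι) : ℝ :=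
  (∏ i ∈ w, prob i) * ∏ i ∈ S \ w, (1 - prob i)

/-- The upper probability of a query `q` in the PASP `(P₀, S, atom, prob)`. -/
noncomputable def UP (P0 : Set (GRule α)) (atom : ι → α) (prob : ι → ℝ)
    (S : Finset ι) (q : α) : ℝ :=
  ∑ w ∈ S.powerset.filter (fun w => ∃ A ∈ AS (worldProg P0 atom w), q ∈ A),
    worldP prob S w

/-- The lower probability of a query `q` in the PASP `(P₀, S, atom, prob)`. -/
noncomputable def LP (P0 : Set (GRule α)) (atom : ι → α) (prob : ι → ℝ)
    (S : Finset ι) (q : α) : ℝ :=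
  ∑ w ∈ S.powerset.filter (fun w => ∀ A ∈ AS (worldProg P0 atom w), q ∈ A),
    worldP prob S w

/-- `(P₀, S, atom, prob)` is a PASP: `P₀` is finite, the probabilistic atoms are pairwise
distinct, none of them is the head of a rule of `P₀`, and probabilities lie in `[0,1]`. -/
def IsPASP (P0 : Set (GRule α)) (atom : ι → α) (prob : ι → ℝ) (S : Finset ι) : Prop :=
  P0.Finite ∧ Set.InjOn atom ↑S ∧ (∀ i ∈ S, ∀ r ∈ P0, r.head ≠ atom i) ∧
    ∀ i ∈ S, prob i ∈ Set.Icc (0 : ℝ) 1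

end ASP
section AuxASP
open ASP

variable {α : Type}

/-! ### Least models of positive programs -/

/-- The least model of a set of positive rules. -/
def lmPos (Q : Set (α × Finset α)) : Set α := ⋂₀ {J | IsModelPos Q J}

lemma isModelPos_anti {Q Q' : Set (α × Finset α)} {J : Set α} (h : Q ⊆ Q')
    (hJ : IsModelPos Q' J) : IsModelPos Q J := fun hb hmem hbody => hJ hb (h hmem) hbody

lemma lmPos_subset {Q : Set (α × Finset α)} {J : Set α} (hJ : IsModelPos Q J) :
    lmPos Q ⊆ J := Set.sInter_subset_of_mem hJ

lemma lmPos_isModel (Q : Set (α × Finset α)) : IsModelPos Q (lmPos Q) := by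
  intro hb hmem hbody
  refine Set.mem_sInter.mpr fun J hJ => ?_
  exact hJ hb hmem fun b hb2 => Set.mem_sInter.mp (hbody b hb2) J hJ

lemma subset_lmPos {Q : Set (α × Finset α)} {A : Set α}
    (h : ∀ J, IsModelPos Q J → A ⊆ J) : A ⊆ lmPos Q :=
  fun a ha => Set.mem_sInter.mpr fun J hJ => h J hJ ha

lemma lmPos_mono {Q Q' : Set (α × Finset α)} (h : Q ⊆ Q') : lmPos Q ⊆ lmPos Q' :=
  lmPos_subset (isModelPos_anti h (lmPos_isModel Q'))

lemma isAnswerSet_iff {P : Set (GRule α)} {A : Set α} :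
    IsAnswerSet P A ↔ lmPos (glReduct P A) = A := by
  constructor
  · rintro ⟨hm, hmin⟩
    have h1 : lmPos (glReduct P A) ⊆ A := lmPos_subset hm
    by_contra hne
    exact hmin _ (h1.ssubset_of_ne hne) (lmPos_isModel _)
  · intro h
    constructor
    · have h2 := lmPos_isModel (glReduct P A)
      rwa [h] at h2
    · intro B hB hBmod
      have h2 := lmPos_subset hBmod
      rw [h] at h2
      exact hB.not_subset h2

lemma isAnswerSet_of {P : Set (GRule α)} {A : Set α}
    (hm : IsModelPos (glReduct P A) A)
    (hl : ∀ M, IsModelPos (glReduct P A) M → A ⊆ M) : IsAnswerSet P A :=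
  isAnswerSet_iff.mpr (subset_antisymm (lmPos_subset hm) (subset_lmPos hl))

lemma ASP.IsAnswerSet.subset_of_model {P : Set (GRule α)} {A M : Set α}
    (h : IsAnswerSet P A) (hM : IsModelPos (glReduct P A) M) : A ⊆ M := by
  have h2 := lmPos_subset hM
  rwa [isAnswerSet_iff.mp h] at h2

/-- The heads of a program. -/
def headsOf (Q : Set (GRule α)) : Set α := {x | ∃ r ∈ Q, r.head = x}

lemma isModelPos_headsOf {Q : Set (GRule α)} {I : Set α} :
    IsModelPos (glReduct Q I) (headsOf Q) := by
  rintro hb ⟨r, hr, -, rfl⟩ -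
  exact ⟨r, hr, rfl⟩

lemma ASP.IsAnswerSet.subset_headsOf {Q : Set (GRule α)} {A : Set α}
    (h : IsAnswerSet Q A) : A ⊆ headsOf Q := h.subset_of_model isModelPos_headsOf

/-! ### Basic lemmas about reducts -/

lemma glReduct_mono_prog {P P' : Set (GRule α)} {I : Set α} (h : P ⊆ P') :
    glReduct P I ⊆ glReduct P' I := by
  rintro hb ⟨r, hr, hn, rfl⟩
  exact ⟨r, h hr, hn, rfl⟩

lemma glReduct_anti {P : Set (GRule α)} {I I' : Set α} (h : I ⊆ I') :
    glReduct P I' ⊆ glReduct P I := by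
  rintro hb ⟨r, hr, hn, rfl⟩
  exact ⟨r, hr, fun c hc hci => hn c hc (h hci), rfl⟩

lemma glReduct_congr {P : Set (GRule α)} {I I' : Set α}
    (h : ∀ r ∈ P, ∀ c ∈ r.neg, (c ∈ I ↔ c ∈ I')) : glReduct P I = glReduct P I' := by
  ext hb
  constructor
  · rintro ⟨r, hr, hn, rfl⟩
    exact ⟨r, hr, fun c hc hci => hn c hc ((h r hr c hc).mpr hci), rfl⟩
  · rintro ⟨r, hr, hn, rfl⟩
    exact ⟨r, hr, fun c hc hci => hn c hc ((h r hr c hc).mp hci), rfl⟩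

lemma glReduct_union {P P' : Set (GRule α)} {I : Set α} :
    glReduct (P ∪ P') I = glReduct P I ∪ glReduct P' I := by
  ext hb
  constructor
  · rintro ⟨r, hr | hr, hn, rfl⟩
    · exact Or.inl ⟨r, hr, hn, rfl⟩
    · exact Or.inr ⟨r, hr, hn, rfl⟩
  · rintro (⟨r, hr, hn, rfl⟩ | ⟨r, hr, hn, rfl⟩)
    · exact ⟨r, Or.inl hr, hn, rfl⟩
    · exact ⟨r, Or.inr hr, hn, rfl⟩

/-! ### Splitting -/

/-- `V` is closed under bodies for rules of `P` headed in `V`. -/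
def ClosedAtoms (P : Set (GRule α)) (V : Set α) : Prop :=
  ∀ r ∈ P, r.head ∈ V → (∀ b ∈ r.pos, b ∈ V) ∧ (∀ c ∈ r.neg, c ∈ V)

/-- The bottom program: rules headed in `V`. -/
def botProg (P : Set (GRule α)) (V : Set α) : Set (GRule α) := {r ∈ P | r.head ∈ V}

/-- Partial evaluation of the top program with respect to `B ⊆ V`. -/
noncomputable def evalTop (P : Set (GRule α)) (V B : Set α) : Set (GRule α) :=
  {r' | ∃ r ∈ P, r.head ∉ V ∧ (∀ b ∈ r.pos, b ∈ V → b ∈ B) ∧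
    (∀ c ∈ r.neg, c ∈ V → c ∉ B) ∧
    r' = ⟨r.head, r.pos.filter (fun b => b ∉ V), r.neg.filter (fun c => c ∉ V)⟩}

lemma splitting_proj {P : Set (GRule α)} {V A : Set α} (hV : ClosedAtoms P V)
    (hA : IsAnswerSet P A) : IsAnswerSet (botProg P V) (A ∩ V) := by
  have hred : glReduct (botProg P V) (A ∩ V) = glReduct (botProg P V) A := by
    refine glReduct_congr fun r hr c hc => ?_
    have hcV : c ∈ V := (hV r hr.1 hr.2).2 c hc
    exact ⟨fun h => h.1, fun h => ⟨h, hcV⟩⟩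
  apply isAnswerSet_of
  · intro hb hmem hbody
    rw [hred] at hmem
    obtain ⟨r, hr, hneg, rfl⟩ := hmem
    have hhead : r.head ∈ A := hA.1 _ ⟨r, hr.1, hneg, rfl⟩ (fun b hb2 => (hbody b hb2).1)
    exact ⟨hhead, hr.2⟩
  · intro M hM
    rw [hred] at hM
    set A' := (M ∩ (A ∩ V)) ∪ (A \ V) with hA'def
    have hA'A : A' ⊆ A := by rintro a (⟨-, ha, -⟩ | ⟨ha, -⟩) <;> exact ha
    have hmod : IsModelPos (glReduct P A) A' := by
      intro hb hmem hbody
      obtain ⟨r, hr, hneg, rfl⟩ := hmem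
      have hposA : ∀ b ∈ r.pos, b ∈ A := fun b hb2 => hA'A (hbody b hb2)
      have hheadA : r.head ∈ A := hA.1 _ ⟨r, hr, hneg, rfl⟩ hposA
      by_cases hh : r.head ∈ V
      · have hposV : ∀ b ∈ r.pos, b ∈ V := (hV r hr hh).1
        have hheadM : r.head ∈ M := by
          refine hM _ ⟨r, ⟨hr, hh⟩, hneg, rfl⟩ fun b hb2 => ?_
          rcases hbody b hb2 with ⟨hbM, -⟩ | ⟨-, hbV⟩
          · exact hbM
          · exact absurd (hposV b hb2) hbV
        exact Or.inl ⟨hheadM, hheadA, hh⟩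
      · exact Or.inr ⟨hheadA, hh⟩
    have hsub := hA.subset_of_model hmod
    rintro a ⟨haA, haV⟩
    rcases hsub haA with ⟨haM, -⟩ | ⟨-, hnv⟩
    · exact haM
    · exact absurd haV hnv

lemma splitting_comb {P : Set (GRule α)} {V B C : Set α} (hV : ClosedAtoms P V)
    (hB : IsAnswerSet (botProg P V) B) (hBV : B ⊆ V)
    (hC : IsAnswerSet (evalTop P V B) C) (hCV : ∀ x ∈ C, x ∉ V) :
    IsAnswerSet P (B ∪ C) := by
  apply isAnswerSet_of
  · intro hb hmem hbody
    obtain ⟨r, hr, hneg, rfl⟩ := hmem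
    by_cases hh : r.head ∈ V
    · have hposV := (hV r hr hh).1
      have hmem2 : (r.head, r.pos) ∈ glReduct (botProg P V) B :=
        ⟨r, ⟨hr, hh⟩, fun c hc hcB => hneg c hc (Or.inl hcB), rfl⟩
      refine Or.inl (hB.1 _ hmem2 fun b hb2 => ?_)
      rcases hbody b hb2 with h | h
      · exact h
      · exact absurd (hposV b hb2) (hCV b h)
    · have hr'mem : (⟨r.head, r.pos.filter (fun b => b ∉ V),
          r.neg.filter (fun c => c ∉ V)⟩ : GRule α) ∈ evalTop P V B := by
        refine ⟨r, hr, hh, fun b hb2 hbV => ?_, fun c hc hcV2 hcB => hneg c hc (Or.inl hcB), rfl⟩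
        rcases hbody b hb2 with h | h
        · exact h
        · exact absurd hbV (hCV b h)
      have hmem2 : (r.head, r.pos.filter (fun b => b ∉ V)) ∈ glReduct (evalTop P V B) C := by
        refine ⟨_, hr'mem, fun c hc hcC => ?_, rfl⟩
        have hc2 : c ∈ r.neg := (Finset.mem_filter.mp hc).1
        exact hneg c hc2 (Or.inr hcC)
      refine Or.inr (hC.1 (r.head, r.pos.filter (fun b => b ∉ V)) hmem2 fun b hb2 => ?_)
      have hb3 := Finset.mem_filter.mp hb2
      rcases hbody b hb3.1 with h | h
      · exact absurd (hBV h) hb3.2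
      · exact h
  · intro M hM
    have hBM : B ⊆ M := by
      have hmod : IsModelPos (glReduct (botProg P V) B) (M ∩ V) := by
        intro hb hmem hbody
        obtain ⟨r, hr, hneg, rfl⟩ := hmem
        have hmem2 : (r.head, r.pos) ∈ glReduct P (B ∪ C) := by
          refine ⟨r, hr.1, fun c hc => ?_, rfl⟩
          rintro (h | h)
          · exact hneg c hc h
          · exact (hCV c h) ((hV r hr.1 hr.2).2 c hc)
        exact ⟨hM _ hmem2 (fun b hb2 => (hbody b hb2).1), hr.2⟩
      exact fun b hb2 => (hB.subset_of_model hmod hb2).1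
    have hCM : C ⊆ M := by
      have hmod : IsModelPos (glReduct (evalTop P V B) C) (M \ V) := by
        intro hb hmem hbody
        obtain ⟨r', hr'mem, hneg', rfl⟩ := hmem
        obtain ⟨r, hr, hh, hposc, hnegc, rfl⟩ := hr'mem
        have hmem2 : (r.head, r.pos) ∈ glReduct P (B ∪ C) := by
          refine ⟨r, hr, fun c hc => ?_, rfl⟩
          rintro (h | h)
          · exact hnegc c hc (hBV h) h
          · exact hneg' c (Finset.mem_filter.mpr ⟨hc, hCV c h⟩) h
        have hheadM : r.head ∈ M := by
          refine hM _ hmem2 fun b hb2 => ?_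
          by_cases hbV : b ∈ V
          · exact hBM (hposc b hb2 hbV)
          · exact (hbody b (Finset.mem_filter.mpr ⟨hb2, hbV⟩)).1
        exact ⟨hheadM, hh⟩
      exact fun c hc => (hC.subset_of_model hmod hc).1
    rintro a (ha | ha)
    exacts [hBM ha, hCM ha]

/-! ### Graph lemmas -/

lemma reaches_trans {P : Set (GRule α)} {x y z : α} {s t : Bool}
    (h1 : Reaches P x y s) (h2 : Reaches P y z t) : Reaches P x z (xor s t) := by
  revert h2
  induction h1 with
  | single e => exact fun h2 => .step e h2
  | step e _ ih =>
      intro h2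
      have := Reaches.step e (ih h2)
      simpa [Bool.xor_assoc] using this

lemma reaches_mono {P P' : Set (GRule α)}
    (h : ∀ {x y : α} {s : Bool}, Edge P x y s → Edge P' x y s) {x y : α} {s : Bool} :
    Reaches P x y s → Reaches P' x y s := by
  intro hr
  induction hr with
  | single e => exact .single (h e)
  | step e _ ih => exact .step (h e) ih

lemma edge_mono {P P' : Set (GRule α)} (hsub : P ⊆ P') {x y : α} {s : Bool} :
    Edge P x y s → Edge P' x y s := by
  rintro ⟨r, hr, hh, hc⟩
  exact ⟨r, hsub hr, hh, hc⟩

lemma olonFree_mono {P P' : Set (GRule α)} (hsub : P ⊆ P') (h : OLONFree P') :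
    OLONFree P := fun a ha => h a (reaches_mono (edge_mono hsub) ha)

lemma reaches_right_mem {P : Set (GRule α)} {x y : α} {s : Bool}
    (h : Reaches P x y s) : y ∈ atomsOf P := by
  induction h with
  | single e =>
      obtain ⟨r, hr, -, hc⟩ := e
      rcases hc with ⟨-, hc⟩ | ⟨-, hc⟩
      · exact ⟨r, hr, Or.inr (Or.inl hc)⟩
      · exact ⟨r, hr, Or.inr (Or.inr hc)⟩
  | step _ _ ih => exact ih

/-! ### Finiteness -/

lemma atomsOf_finite {P : Set (GRule α)} (hP : P.Finite) : (atomsOf P).Finite := by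
  have hsub : atomsOf P ⊆ ⋃ r ∈ P, ({r.head} ∪ (↑r.pos ∪ ↑r.neg) : Set α) := by
    rintro a ⟨r, hr, h⟩
    refine Set.mem_biUnion hr ?_
    rcases h with h | h | h
    · exact Or.inl h
    · exact Or.inr (Or.inl h)
    · exact Or.inr (Or.inr h)
  exact (hP.biUnion fun r _ =>
    ((Set.finite_singleton _).union (r.pos.finite_toSet.union r.neg.finite_toSet))).subset hsub

lemma atomsOf_mono {P P' : Set (GRule α)} (h : P ⊆ P') : atomsOf P ⊆ atomsOf P' := by
  rintro a ⟨r, hr, hc⟩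
  exact ⟨r, h hr, hc⟩

lemma evalTop_finite {P : Set (GRule α)} (hP : P.Finite) (V B : Set α) :
    (evalTop P V B).Finite := by
  refine (hP.image (fun r : GRule α => (⟨r.head, r.pos.filter (fun b => b ∉ V),
    r.neg.filter (fun c => c ∉ V)⟩ : GRule α))).subset ?_
  rintro r' ⟨r, hr, -, -, -, rfl⟩
  exact ⟨r, hr, rfl⟩

lemma edge_evalTop {P : Set (GRule α)} {V B : Set α} {x y : α} {s : Bool}
    (h : Edge (evalTop P V B) x y s) : Edge P x y s := by
  obtain ⟨r', ⟨r, hr, -, -, -, rfl⟩, hh, hc⟩ := h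
  rcases hc with ⟨hs, hc⟩ | ⟨hs, hc⟩
  · exact ⟨r, hr, hh, Or.inl ⟨hs, (Finset.mem_filter.mp hc).1⟩⟩
  · exact ⟨r, hr, hh, Or.inr ⟨hs, (Finset.mem_filter.mp hc).1⟩⟩

lemma atomsOf_evalTop {P : Set (GRule α)} {V B : Set α} :
    atomsOf (evalTop P V B) ⊆ {a | a ∈ atomsOf P ∧ a ∉ V} := by
  rintro a ⟨r', ⟨r, hr, hhV, -, -, rfl⟩, h⟩
  rcases h with h | h | h
  · exact ⟨⟨r, hr, Or.inl h⟩, h ▸ hhV⟩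
  · have h2 := Finset.mem_filter.mp h
    exact ⟨⟨r, hr, Or.inr (Or.inl h2.1)⟩, h2.2⟩
  · have h2 := Finset.mem_filter.mp h
    exact ⟨⟨r, hr, Or.inr (Or.inr h2.1)⟩, h2.2⟩

lemma atomsOf_botProg_subset {P : Set (GRule α)} {V : Set α} (hV : ClosedAtoms P V) :
    atomsOf (botProg P V) ⊆ V := by
  rintro a ⟨r, ⟨hrP, hrV⟩, h⟩
  rcases h with h | h | h
  · exact h ▸ hrV
  · exact (hV r hrP hrV).1 a h
  · exact (hV r hrP hrV).2 a h

/-- Atoms reachable from `x0` (including `x0`). -/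
def reachSet (P : Set (GRule α)) (x0 : α) : Set α :=
  insert x0 {y | ∃ s, Reaches P x0 y s}

lemma reachSet_closed (P : Set (GRule α)) (x0 : α) : ClosedAtoms P (reachSet P x0) := by
  intro r hr hhead
  have key : ∀ (b : α) (s : Bool), ((s = false ∧ b ∈ r.pos) ∨ (s = true ∧ b ∈ r.neg)) →
      b ∈ reachSet P x0 := by
    intro b s hb
    have e : Edge P r.head b s := ⟨r, hr, rfl, hb⟩
    rcases hhead with rfl | ⟨t, ht⟩
    · exact Or.inr ⟨s, .single e⟩
    · exact Or.inr ⟨_, reaches_trans ht (.single e)⟩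
  exact ⟨fun b hb => key b false (Or.inl ⟨rfl, hb⟩), fun c hc => key c true (Or.inr ⟨rfl, hc⟩)⟩

/-! ### Existence of answer sets for finite OLON-free programs -/

lemma exists_answerSet_aux : ∀ n : ℕ, ∀ P : Set (GRule α), P.Finite → OLONFree P →
    (atomsOf P).ncard ≤ n → ∃ A, IsAnswerSet P A := by
  intro n
  induction n with
  | zero =>
      intro P hP holon hcard
      have hfin := atomsOf_finite hP
      have hempty : atomsOf P = ∅ := by
        have := Set.ncard_eq_zero hfin
        rw [← this]
        omega
      have hPe : P = ∅ := by
        refine Set.eq_empty_iff_forall_notMem.mpr fun r hr => ?_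
        have : r.head ∈ atomsOf P := ⟨r, hr, Or.inl rfl⟩
        simp [hempty] at this
      subst hPe
      refine ⟨∅, isAnswerSet_of ?_ ?_⟩
      · rintro hb ⟨r, hr, -, -⟩
        exact absurd hr (Set.notMem_empty r)
      · intro M _
        exact Set.empty_subset M
  | succ n ih =>
      intro P hP holon hcard
      by_cases hle : (atomsOf P).ncard ≤ n
      · exact ih P hP holon hle
      have hfin := atomsOf_finite hP
      have hne : (atomsOf P).Nonempty := by
        rw [Set.nonempty_iff_ne_empty]
        intro h
        apply hle
        simp [h]
      by_cases hflat : ∀ x ∈ atomsOf P, atomsOf P ⊆ reachSet P x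
      · -- strongly-connected case: 2-coloring + fixpoint
        obtain ⟨x0, hx0⟩ := hne
        set col : α → Prop := fun y => Reaches P x0 y true with hcol
        have mutual1 : ∀ y ∈ atomsOf P, y ≠ x0 → ∃ s, Reaches P x0 y s := by
          intro y hy hyx
          rcases hflat x0 hx0 hy with h | h
          · exact absurd h hyx
          · exact h
        have mutual2 : ∀ y ∈ atomsOf P, y ≠ x0 → ∃ t, Reaches P y x0 t := by
          intro y hy hyx
          rcases hflat y hy hx0 with h | h
          · exact absurd h.symm hyx
          · exact h
        have uniq : ∀ z, Reaches P x0 z true → Reaches P x0 z false → False := by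
          intro z h1 h0
          have hz : z ∈ atomsOf P := reaches_right_mem h1
          by_cases hzx : z = x0
          · subst hzx; exact holon z h1
          · obtain ⟨t, ht⟩ := mutual2 z hz hzx
            cases t
            · exact holon x0 (by simpa using reaches_trans h1 ht)
            · exact holon x0 (by simpa using reaches_trans h0 ht)
        have fact2 : ∀ y z : α, ∀ s : Bool, Edge P y z s → ¬ col y → Reaches P x0 z s := by
          intro y z s e hny
          by_cases hyx : y = x0
          · subst hyx; exact .single e
          · have hy : y ∈ atomsOf P := by
              obtain ⟨r, hr, hh, -⟩ := e
              exact ⟨r, hr, Or.inl hh.symm⟩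
            obtain ⟨u, hu⟩ := mutual1 y hy hyx
            cases u
            · simpa using reaches_trans hu (.single e)
            · exact absurd hu hny
        have hpos : ∀ y z : α, Edge P y z false → (col z ↔ col y) := by
          intro y z e
          constructor
          · intro hz
            by_contra hny
            exact uniq z hz (fact2 y z false e hny)
          · intro hy
            simpa using reaches_trans hy (.single e)
        have hneg2 : ∀ y z : α, Edge P y z true → (col z ↔ ¬ col y) := by
          intro y z e
          constructor
          · intro hz hy
            exact uniq z hz (by simpa using reaches_trans hy (.single e))
          · intro hny
            exact fact2 y z true e hny
        set PL : Set (GRule α) := {r ∈ P | ¬ col r.head} with hPL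
        set PU : Set (GRule α) := {r ∈ P | col r.head} with hPU
        have hPLP : PL ⊆ P := fun r hr => hr.1
        have hPUP : PU ⊆ P := fun r hr => hr.1
        obtain ⟨Uf, hUfeq⟩ : ∃ U : Set α,
            lmPos (glReduct PU (lmPos (glReduct PL U))) = U := by
          have Fmono : Monotone (fun U : Set α =>
              lmPos (glReduct PU (lmPos (glReduct PL U)))) := fun U U' hUU' =>
            lmPos_mono (glReduct_anti (lmPos_mono (glReduct_anti hUU')))
          let F : Set α →o Set α :=
            ⟨fun U => lmPos (glReduct PU (lmPos (glReduct PL U))), Fmono⟩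
          exact ⟨OrderHom.lfp F, OrderHom.map_lfp F⟩
        set Lf : Set α := lmPos (glReduct PL Uf) with hLfdef
        have hLfmodel : IsModelPos (glReduct PL Uf) Lf := by
          rw [hLfdef]; exact lmPos_isModel _
        have hUfmodel : IsModelPos (glReduct PU Lf) Uf := by
          rw [← hUfeq]; exact lmPos_isModel _
        have hLfleast : ∀ M, IsModelPos (glReduct PL Uf) M → Lf ⊆ M := by
          intro M hM; rw [hLfdef]; exact lmPos_subset hM
        have hUfleast : ∀ M, IsModelPos (glReduct PU Lf) M → Uf ⊆ M := by
          intro M hM; rw [← hUfeq]; exact lmPos_subset hM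
        have hLcol : ∀ x ∈ Lf, ¬ col x := by
          intro x hx
          obtain ⟨r, hr, rfl⟩ := hLfleast _ isModelPos_headsOf hx
          exact hr.2
        have hUcol : ∀ x ∈ Uf, col x := by
          intro x hx
          obtain ⟨r, hr, rfl⟩ := hUfleast _ isModelPos_headsOf hx
          exact hr.2
        set A : Set α := Lf ∪ Uf with hAdef
        have hPsplit : P = PL ∪ PU := by
          ext r
          constructor
          · intro hr
            by_cases hc : col r.head
            · exact Or.inr ⟨hr, hc⟩
            · exact Or.inl ⟨hr, hc⟩
          · rintro (hr | hr) <;> exact hr.1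
        have hmemA_U : ∀ c, col c → (c ∈ A ↔ c ∈ Uf) := by
          intro c hc
          constructor
          · rintro (h | h)
            · exact absurd hc (hLcol c h)
            · exact h
          · exact Or.inr
        have hmemA_L : ∀ c, ¬ col c → (c ∈ A ↔ c ∈ Lf) := by
          intro c hc
          constructor
          · rintro (h | h)
            · exact h
            · exact absurd (hUcol c h) hc
          · exact Or.inl
        have hredL : glReduct PL A = glReduct PL Uf := by
          refine glReduct_congr fun r hr c hc => ?_
          have e : Edge P r.head c true := ⟨r, hr.1, rfl, Or.inr ⟨rfl, hc⟩⟩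
          have : col c := (hneg2 _ _ e).mpr hr.2
          exact hmemA_U c this
        have hredU : glReduct PU A = glReduct PU Lf := by
          refine glReduct_congr fun r hr c hc => ?_
          have e : Edge P r.head c true := ⟨r, hr.1, rfl, Or.inr ⟨rfl, hc⟩⟩
          have : ¬ col c := fun h => ((hneg2 _ _ e).mp h) hr.2
          exact hmemA_L c this
        refine ⟨A, isAnswerSet_of ?_ ?_⟩
        · intro hb hmem hbody
          obtain ⟨r, hr, hneg', rfl⟩ := hmem
          by_cases hc : col r.head
          · have hmem2 : (r.head, r.pos) ∈ glReduct PU Lf := by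
              rw [← hredU]
              exact ⟨r, ⟨hr, hc⟩, hneg', rfl⟩
            have hposU : ∀ b ∈ r.pos, b ∈ Uf := by
              intro b hb2
              have e : Edge P r.head b false := ⟨r, hr, rfl, Or.inl ⟨rfl, hb2⟩⟩
              have : col b := (hpos _ _ e).mpr hc
              exact (hmemA_U b this).mp (hbody b hb2)
            exact Or.inr (hUfmodel _ hmem2 hposU)
          · have hmem2 : (r.head, r.pos) ∈ glReduct PL Uf := by
              rw [← hredL]
              exact ⟨r, ⟨hr, hc⟩, hneg', rfl⟩
            have hposL : ∀ b ∈ r.pos, b ∈ Lf := by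
              intro b hb2
              have e : Edge P r.head b false := ⟨r, hr, rfl, Or.inl ⟨rfl, hb2⟩⟩
              have : ¬ col b := fun h => hc ((hpos _ _ e).mp h)
              exact (hmemA_L b this).mp (hbody b hb2)
            exact Or.inl (hLfmodel _ hmem2 hposL)
        · intro M hM
          have hML : IsModelPos (glReduct PL Uf) M := by
            rw [← hredL]
            exact isModelPos_anti (glReduct_mono_prog hPLP) hM
          have hMU : IsModelPos (glReduct PU Lf) M := by
            rw [← hredU]
            exact isModelPos_anti (glReduct_mono_prog hPUP) hM
          exact Set.union_subset (hLfleast M hML) (hUfleast M hMU)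
      · -- splitting case
        push_neg at hflat
        obtain ⟨x0, hx0, hnsub⟩ := hflat
        obtain ⟨z, hzX, hzV⟩ := Set.not_subset.mp hnsub
        set V : Set α := reachSet P x0 with hVdef
        have hVclosed : ClosedAtoms P V := reachSet_closed P x0
        have hbotsub : botProg P V ⊆ P := fun r hr => hr.1
        have hbotfin : (botProg P V).Finite := hP.subset hbotsub
        have hbotolon : OLONFree (botProg P V) := olonFree_mono hbotsub holon
        have hbotatoms : atomsOf (botProg P V) ⊆ atomsOf P \ {z} := by
          intro a ha
          refine ⟨atomsOf_mono hbotsub ha, ?_⟩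
          rintro rfl
          exact hzV (atomsOf_botProg_subset hVclosed ha)
        have hbotcard : (atomsOf (botProg P V)).ncard ≤ n := by
          have h1 := Set.ncard_le_ncard hbotatoms hfin.diff
          have h2 : (atomsOf P \ {z}).ncard < (atomsOf P).ncard :=
            Set.ncard_diff_singleton_lt_of_mem hzX hfin
          omega
        obtain ⟨B, hB⟩ := ih (botProg P V) hbotfin hbotolon hbotcard
        have hBV : B ⊆ V := by
          intro b hb
          obtain ⟨r, hr, rfl⟩ := hB.subset_headsOf hb
          exact hr.2
        set Q : Set (GRule α) := evalTop P V B with hQdef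
        have hQfin : Q.Finite := evalTop_finite hP V B
        have hQolon : OLONFree Q := fun a ha => holon a (reaches_mono edge_evalTop ha)
        have hx0V : x0 ∈ V := Or.inl rfl
        have hQatoms : atomsOf Q ⊆ atomsOf P \ {x0} := by
          intro a ha
          have h2 := atomsOf_evalTop ha
          refine ⟨h2.1, ?_⟩
          rintro rfl
          exact h2.2 hx0V
        have hQcard : (atomsOf Q).ncard ≤ n := by
          have h1 := Set.ncard_le_ncard hQatoms hfin.diff
          have h2 : (atomsOf P \ {x0}).ncard < (atomsOf P).ncard :=
            Set.ncard_diff_singleton_lt_of_mem hx0 hfin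
          omega
        obtain ⟨C, hC⟩ := ih Q hQfin hQolon hQcard
        have hCV : ∀ x ∈ C, x ∉ V := by
          intro x hx
          obtain ⟨r', hr', rfl⟩ := hC.subset_headsOf hx
          obtain ⟨r, hr, hh, -, -, rfl⟩ := hr'
          exact hh
        exact ⟨B ∪ C, splitting_comb hVclosed hB hBV hC hCV⟩

lemma exists_answerSet {P : Set (GRule α)} (hP : P.Finite) (holon : OLONFree P) :
    ∃ A, IsAnswerSet P A :=
  exists_answerSet_aux (atomsOf P).ncard P hP holon le_rfl

end AuxASP

open ASP in
/-- If the finite ground normal program `P` is OLON-free and `R ⊆ P` is a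
relevance-closed subprogram with atom set `B_R`, then `AS_{B_R}(P) = AS(R)`. -/
theorem projected_answerSets_eq {α : Type} (P R : Set (GRule α)) (hP : P.Finite)
    (holon : OLONFree P) (hR : RelevanceClosed P R) :
    {B | ∃ A ∈ AS P, B = A ∩ atomsOf R} = AS R := by
  have hbotR : botProg P (atomsOf R) = R := by
    ext r
    constructor
    · rintro ⟨hrP, hrV⟩
      exact hR.2 r hrP hrV
    · intro hr
      exact ⟨hR.1 hr, ⟨r, hr, Or.inl rfl⟩⟩
  have hVclosed : ClosedAtoms P (atomsOf R) := by
    intro r hrP hrV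
    have hrR : r ∈ R := hR.2 r hrP hrV
    exact ⟨fun b hb => ⟨r, hrR, Or.inr (Or.inl hb)⟩, fun c hc => ⟨r, hrR, Or.inr (Or.inr hc)⟩⟩
  ext B
  constructor
  · rintro ⟨A, hA, rfl⟩
    have h1 := splitting_proj hVclosed hA
    rw [hbotR] at h1
    exact h1
  · intro hB
    have hBas : IsAnswerSet R B := hB
    have hB' : IsAnswerSet (botProg P (atomsOf R)) B := by rw [hbotR]; exact hBas
    have hBV : B ⊆ atomsOf R := by
      intro b hb
      obtain ⟨r, hr, rfl⟩ := hBas.subset_headsOf hb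
      exact ⟨r, hr, Or.inl rfl⟩
    obtain ⟨C, hC⟩ := exists_answerSet (evalTop_finite hP (atomsOf R) B)
      (fun a ha => holon a (reaches_mono edge_evalTop ha))
    have hCV : ∀ x ∈ C, x ∉ atomsOf R := by
      intro x hx
      obtain ⟨r', hr', rfl⟩ := hC.subset_headsOf hx
      obtain ⟨r, hr, hh, -, -, rfl⟩ := hr'
      exact hh
    refine ⟨B ∪ C, splitting_comb hVclosed hB' hBV hC hCV, ?_⟩
    apply subset_antisymm
    · intro b hb
      exact ⟨Or.inl hb, hBV hb⟩
    · rintro a ⟨ha | ha, haV⟩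
      · exact ha
      · exact absurd haV (hCV a ha)
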